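/- For any prime power q and positive integer n, the order of the finite unitary group U(n,q) (the group of n×n matrices A over F_{q^2} whose inverse equals the conjugate transpose under the involution c ↦ c^q) equals q^{n^2} · ∏_{j=1}^{n} (1 - (-1)^j / q^j). -/

import Mathlib

namespace UGC
open Finset

variable {q : ℕ} {F : Type} [Field F] [Fintype F]

lemma two_le_q (hq : IsPrimePow q) : 2 ≤ q := hq.two_le

lemma frob_add (hq : IsPrimePow q) (hF : Fintype.card F = q ^ 2) (x y : F) :
    (x + y) ^ q = x ^ q + y ^ q := by
  obtain ⟨p, k, hp, hk, rfl⟩ := hq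
  have hp' : Nat.Prime p := Nat.prime_iff.2 hp
  haveI := Fact.mk hp'
  obtain ⟨n, hrp, hcard⟩ := FiniteField.card F (ringChar F)
  have hdvd : p ∣ ringChar F ^ (n : ℕ) := by
    rw [← hcard, hF, ← pow_mul]
    exact dvd_pow_self p (by positivity)
  have : p = ringChar F := ((Nat.prime_dvd_prime_iff_eq hp' hrp).1
    (hp'.dvd_of_dvd_pow hdvd))
  haveI : CharP F p := this ▸ ringChar.charP F
  exact add_pow_char_pow x y p k

lemma frob_sum (hq : IsPrimePow q) (hF : Fintype.card F = q ^ 2)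
    {ι : Type*} (s : Finset ι) (f : ι → F) :
    (∑ i ∈ s, f i) ^ q = ∑ i ∈ s, (f i) ^ q := by
  induction s using Finset.cons_induction with
  | empty => simp [zero_pow (by have := hq.pos; omega : q ≠ 0)]
  | cons a s ha ih => simp [Finset.sum_cons, frob_add hq hF, ih]

lemma frob_frob (hF : Fintype.card F = q ^ 2) (x : F) : (x ^ q) ^ q = x := by
  rw [← pow_mul, ← sq, ← hF]
  exact FiniteField.pow_card x

lemma norm_mem_K (hF : Fintype.card F = q ^ 2) (x : F) :
    (x ^ (q + 1)) ^ q = x ^ (q + 1) := by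
  have : x ^ (q + 1) = x ^ q * x := by rw [pow_succ]
  rw [this, mul_pow, frob_frob hF, mul_comm]

variable [DecidableEq F]

lemma card_root_le {pl : Polynomial F} (h : pl ≠ 0) :
    (univ.filter fun x : F => pl.eval x = 0).card ≤ pl.natDegree := by
  have hsub : (univ.filter fun x : F => pl.eval x = 0) ⊆ pl.roots.toFinset := by
    intro x hx
    simp only [mem_filter] at hx
    simp [Polynomial.mem_roots, h, Polynomial.IsRoot, hx.2]
  calc (univ.filter fun x : F => pl.eval x = 0).card
      ≤ pl.roots.toFinset.card := Finset.card_le_card hsub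
    _ ≤ Multiset.card pl.roots := pl.roots.toFinset_card_le
    _ ≤ pl.natDegree := Polynomial.card_roots' pl

lemma card_pow_eq_le {n : ℕ} (hn : 0 < n) (c : F) :
    (univ.filter fun x : F => x ^ n = c).card ≤ n := by
  have hne : (Polynomial.X ^ n - Polynomial.C c : Polynomial F) ≠ 0 := by
    intro h
    have := Polynomial.natDegree_X_pow_sub_C (n := n) (r := c)
    rw [h] at this
    simp at this
    omega
  have := card_root_le hne
  rw [Polynomial.natDegree_X_pow_sub_C] at this
  convert this using 2
  ext x
  simp [sub_eq_zero]



lemma key_counts (hq : IsPrimePow q) (hF : Fintype.card F = q ^ 2)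
 :
    (univ.filter fun c : F => c ^ q = c ∧ c ≠ 0).card = q - 1 ∧
    (∀ c : F, c ^ q = c → c ≠ 0 →
      (univ.filter fun x : F => x ^ (q + 1) = c).card = q + 1) := by
  have hq2 : 2 ≤ q := hq.two_le
  set Kf : Finset F := univ.filter fun c : F => c ^ q = c ∧ c ≠ 0 with hKf
  -- Kf.card ≤ q - 1
  have hKle : Kf.card ≤ q - 1 := by
    have hsub : Kf ⊆ univ.filter fun c : F => c ^ (q - 1) = 1 := by
      intro c hc
      simp only [hKf, mem_filter, mem_univ, true_and] at hc ⊢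
      obtain ⟨h1, h2⟩ := hc
      have : c ^ (q - 1) * c = 1 * c := by
        rw [one_mul, ← pow_succ]
        have : q - 1 + 1 = q := by omega
        rw [this, h1]
      exact mul_right_cancel₀ h2 this
    exact (Finset.card_le_card hsub).trans (card_pow_eq_le (F := F) (by omega) 1)
  -- fiberwise count
  have hmain : q ^ 2 - 1 = ∑ c ∈ Kf, (univ.filter fun x : F => x ^ (q + 1) = c).card := by
    have h1 : (univ.filter fun x : F => x ≠ 0).card = q ^ 2 - 1 := by
      rw [Finset.filter_ne', Finset.card_erase_of_mem (mem_univ 0), Finset.card_univ, hF]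
    rw [← h1]
    rw [Finset.card_eq_sum_card_fiberwise (f := fun x : F => x ^ (q + 1)) (t := Kf)
      (fun x hx => by
        have hx0 : x ≠ 0 := by simpa using hx
        simp only [hKf, Finset.mem_coe, mem_filter, mem_univ, true_and]
        exact ⟨norm_mem_K hF x, pow_ne_zero _ hx0⟩)]
    refine Finset.sum_congr rfl fun c hc => ?_
    congr 1
    ext x
    simp only [mem_filter, mem_univ, true_and, and_iff_right_iff_imp]
    intro hx
    simp only [hKf, mem_filter, mem_univ, true_and] at hc
    intro h0
    rw [h0, zero_pow (by omega : q + 1 ≠ 0)] at hx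
    exact hc.2 hx.symm
  have hq21 : q ^ 2 - 1 = (q - 1) * (q + 1) := by
    cases' Nat.exists_eq_add_of_le hq2 with t ht
    subst ht
    have h1 : (2 + t) ^ 2 = t ^ 2 + 4 * t + 4 := by ring
    have h2 : (2 + t - 1) * (2 + t + 1) = t ^ 2 + 4 * t + 3 := by
      have h3 : 2 + t - 1 = t + 1 := by omega
      rw [h3]; ring
    omega
  -- upper bound forces equality
  have hle2 : q ^ 2 - 1 ≤ Kf.card * (q + 1) := by
    rw [hmain]
    calc ∑ c ∈ Kf, (univ.filter fun x : F => x ^ (q + 1) = c).card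
        ≤ ∑ _c ∈ Kf, (q + 1) := Finset.sum_le_sum fun c _ => card_pow_eq_le (F := F) (by omega) c
      _ = Kf.card * (q + 1) := by rw [Finset.sum_const, smul_eq_mul]
  have hKcard : Kf.card = q - 1 := by
    refine le_antisymm hKle ?_
    by_contra h
    push_neg at h
    have : Kf.card * (q + 1) < (q - 1) * (q + 1) := by
      exact (Nat.mul_lt_mul_right (by omega : 0 < q + 1)).2 h
    omega
  have hfib : ∀ c ∈ Kf, (univ.filter fun x : F => x ^ (q + 1) = c).card = q + 1 := by
    have hsum : ∑ c ∈ Kf, (univ.filter fun x : F => x ^ (q + 1) = c).card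
        = ∑ _c ∈ Kf, (q + 1) := by
      rw [Finset.sum_const, smul_eq_mul, hKcard, ← hq21, ← hmain]
    exact fun c hc => (Finset.sum_eq_sum_iff_of_le
      (fun c _ => card_pow_eq_le (F := F) (by omega) c)).1 hsum c hc
  exact ⟨hKcard, fun c h1 h2 => hfib c (by simp [hKf, h1, h2])⟩


lemma norm_fiber_card (hq : IsPrimePow q) (hF : Fintype.card F = q ^ 2)
    {c : F} (h1 : c ^ q = c) (h0 : c ≠ 0) :
    (univ.filter fun x : F => x ^ (q + 1) = c).card = q + 1 :=
  (key_counts hq hF).2 c h1 h0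

lemma Kf_card (hq : IsPrimePow q) (hF : Fintype.card F = q ^ 2) :
    (univ.filter fun c : F => c ^ q = c ∧ c ≠ 0).card = q - 1 :=
  (key_counts hq hF).1

lemma K_card (hq : IsPrimePow q) (hF : Fintype.card F = q ^ 2) :
    (univ.filter fun c : F => c ^ q = c).card = q := by
  have h1 : (univ.filter fun c : F => c ^ q = c).erase 0
      = univ.filter fun c : F => c ^ q = c ∧ c ≠ 0 := by
    ext c
    simp only [mem_erase, mem_filter, mem_univ, true_and]
    tauto
  have h0 : (0 : F) ∈ univ.filter fun c : F => c ^ q = c := by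
    simp [zero_pow (by have := hq.pos; omega : q ≠ 0)]
  have := Finset.card_erase_of_mem h0
  rw [h1, Kf_card hq hF] at this
  have hpos : 0 < (univ.filter fun c : F => c ^ q = c).card :=
    Finset.card_pos.2 ⟨0, h0⟩
  have := hq.two_le
  omega

lemma exists_norm_eq (hq : IsPrimePow q) (hF : Fintype.card F = q ^ 2)
    {c : F} (h1 : c ^ q = c) (h0 : c ≠ 0) : ∃ μ : F, μ ^ (q + 1) = c := by
  have := norm_fiber_card hq hF h1 h0
  have hne : (univ.filter fun x : F => x ^ (q + 1) = c).Nonempty := by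
    rw [← Finset.card_pos, this]; omega
  obtain ⟨μ, hμ⟩ := hne
  exact ⟨μ, (mem_filter.1 hμ).2⟩

lemma trace_ne (hq : IsPrimePow q) (hF : Fintype.card F = q ^ 2)
    {a : F} (ha : a ≠ 0) : ∃ z : F, z * a + (z * a) ^ q ≠ 0 := by
  by_contra h
  push_neg at h
  have hall : ∀ y : F, y + y ^ q = 0 := fun y => by
    have := h (y * a⁻¹)
    rwa [mul_assoc, inv_mul_cancel₀ ha, mul_one] at this
  have hq2 : 2 ≤ q := hq.two_le
  have hne : (Polynomial.X ^ q + Polynomial.X : Polynomial F) ≠ 0 := by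
    intro hz
    have hdeg : (Polynomial.X ^ q + Polynomial.X : Polynomial F).natDegree = q := by
      rw [Polynomial.natDegree_add_eq_left_of_natDegree_lt]
      · exact Polynomial.natDegree_X_pow q
      · rw [Polynomial.natDegree_X_pow, Polynomial.natDegree_X]; omega
    rw [hz] at hdeg
    simp at hdeg
    omega
  have hdeg : (Polynomial.X ^ q + Polynomial.X : Polynomial F).natDegree = q := by
    rw [Polynomial.natDegree_add_eq_left_of_natDegree_lt]
    · exact Polynomial.natDegree_X_pow q
    · rw [Polynomial.natDegree_X_pow, Polynomial.natDegree_X]; omega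
  have := card_root_le hne
  rw [hdeg] at this
  have hfull : (univ.filter fun x : F => Polynomial.eval x
      (Polynomial.X ^ q + Polynomial.X : Polynomial F) = 0) = univ := by
    apply Finset.eq_univ_of_forall
    intro x
    simp only [mem_filter, mem_univ, true_and, Polynomial.eval_add,
      Polynomial.eval_pow, Polynomial.eval_X]
    have := hall x
    linear_combination this
  rw [hfull, Finset.card_univ, hF] at this
  nlinarith

lemma frob_sub (hq : IsPrimePow q) (hF : Fintype.card F = q ^ 2) (x y : F) :
    (x - y) ^ q = x ^ q - y ^ q := by
  have := frob_add hq hF (x - y) y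
  rw [sub_add_cancel] at this
  linear_combination -this

variable (q) (F)

def Nq (m : ℕ) (c : F) : ℕ :=
  (univ.filter fun x : Fin m → F => ∑ i, (x i) ^ (q + 1) = c).card

variable {q} {F}

lemma Nq_scale (hq : IsPrimePow q) (hF : Fintype.card F = q ^ 2) {m : ℕ} {c : F}
    (h1 : c ^ q = c) (h0 : c ≠ 0) : Nq q F m c = Nq q F m 1 := by
  obtain ⟨μ, hμ⟩ := exists_norm_eq hq hF h1 h0
  have hμ0 : μ ≠ 0 := by rintro rfl; rw [zero_pow (by omega : q + 1 ≠ 0)] at hμ; exact h0 hμ.symm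
  refine Finset.card_bij' (fun x _ => fun i => μ⁻¹ * x i) (fun y _ => fun i => μ * y i)
    ?_ ?_ ?_ ?_
  · intro x hx
    simp only [Nq, mem_filter, mem_univ, true_and] at hx ⊢
    rw [← hμ] at hx
    simp only [mul_pow, ← Finset.mul_sum, hx]
    rw [inv_pow, inv_mul_cancel₀ (pow_ne_zero _ hμ0)]
  · intro y hy
    simp only [Nq, mem_filter, mem_univ, true_and] at hy ⊢
    simp only [mul_pow, ← Finset.mul_sum, hy, hμ, mul_one]
  · intro x _; funext i; field_simp
  · intro y _; funext i; field_simp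

lemma Nq_total (hq : IsPrimePow q) (hF : Fintype.card F = q ^ 2) (m : ℕ) :
    Nq q F m 0 + (q - 1) * Nq q F m 1 = q ^ (2 * m) := by
  have htot : (univ : Finset (Fin m → F)).card = q ^ (2 * m) := by
    rw [Finset.card_univ, Fintype.card_fun, hF, Fintype.card_fin, ← pow_mul, mul_comm]
  rw [← htot]
  rw [Finset.card_eq_sum_card_fiberwise (f := fun x : Fin m → F => ∑ i, (x i) ^ (q + 1))
    (t := univ.filter fun c : F => c ^ q = c) (fun x _ => by
      simp only [Finset.mem_coe, mem_filter, mem_univ, true_and]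
      rw [frob_sum hq hF]
      exact Finset.sum_congr rfl fun i _ => norm_mem_K hF (x i))]
  have hsplit : (univ.filter fun c : F => c ^ q = c)
      = insert 0 (univ.filter fun c : F => c ^ q = c ∧ c ≠ 0) := by
    ext c
    simp only [mem_insert, mem_filter, mem_univ, true_and]
    constructor
    · intro h; by_cases hc : c = 0
      · exact Or.inl hc
      · exact Or.inr ⟨h, hc⟩
    · rintro (rfl | ⟨h, _⟩)
      · exact zero_pow (by have := hq.pos; omega)
      · exact h
  rw [hsplit, Finset.sum_insert (by simp)]
  have hfil : ∀ c : F, (Finset.filter (fun x : Fin m → F => ∑ i, (x i) ^ (q+1) = c) univ).card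
      = Nq q F m c := fun c => rfl
  rw [hfil]
  congr 1
  rw [Finset.sum_congr rfl (fun c hc => by
      rw [hfil, Nq_scale hq hF (mem_filter.1 hc).2.1 (mem_filter.1 hc).2.2]),
    Finset.sum_const, Kf_card hq hF, smul_eq_mul]

lemma Nq_one (hq : IsPrimePow q) (hF : Fintype.card F = q ^ 2) : Nq q F 1 1 = q + 1 := by
  rw [← norm_fiber_card hq hF (one_pow q) one_ne_zero]
  refine Finset.card_bij' (fun x _ => x 0) (fun a _ => fun _ => a) ?_ ?_ ?_ ?_
  · intro x hx
    simp only [Nq, mem_filter, mem_univ, true_and] at hx ⊢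
    rwa [Fin.sum_univ_one] at hx
  · intro a ha
    simp only [mem_filter, mem_univ, true_and] at ha ⊢
    rwa [Fin.sum_univ_one]
  · intro x _
    funext i
    have : i = 0 := Subsingleton.elim i 0
    rw [this]
  · intro a _; rfl

lemma Nq_rec (hq : IsPrimePow q) (hF : Fintype.card F = q ^ 2) (m : ℕ) :
    Nq q F (m + 1) 1
      = Nq q F m 1 + (q + 1) * (Nq q F m 0 + (q - 2) * Nq q F m 1) := by
  have hq2 : 2 ≤ q := hq.two_le
  set Kf : Finset F := univ.filter fun c : F => c ^ q = c ∧ c ≠ 0 with hKfdef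
  have r12 : Nq q F (m + 1) 1 = ∑ a : F, Nq q F m (1 - a ^ (q + 1)) := by
    rw [show Nq q F (m+1) 1 = (univ.filter fun x : Fin (m+1) → F => ∑ i, (x i) ^ (q + 1) = 1).card from rfl]
    rw [Finset.card_eq_sum_card_fiberwise (f := fun x : Fin (m+1) → F => x 0)
      (t := univ) (fun x _ => mem_univ _)]
    refine Finset.sum_congr rfl fun a _ => ?_
    rw [Finset.filter_filter]
    refine Finset.card_bij' (fun x _ => x ∘ Fin.succ) (fun y _ => Fin.cons a y) ?_ ?_ ?_ ?_
    · intro x hx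
      simp only [mem_filter, mem_univ, true_and] at hx
      obtain ⟨hs, h0⟩ := hx
      rw [Fin.sum_univ_succ, h0] at hs
      simp only [Nq, mem_filter, mem_univ, true_and, Function.comp]
      linear_combination hs
    · intro y hy
      simp only [Nq, mem_filter, mem_univ, true_and] at hy ⊢
      constructor
      · rw [Fin.sum_univ_succ, Fin.cons_zero]
        simp only [Fin.cons_succ]
        rw [hy]; ring
      · simp
    · intro x hx
      simp only [mem_filter, mem_univ, true_and] at hx
      funext i
      refine Fin.cases ?_ ?_ i
      · simp [hx.2]
      · intro j; simp
    · intro y _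
      funext i
      simp
  have r3 : ∑ a : F, Nq q F m (1 - a ^ (q + 1))
      = Nq q F m 1 + (q + 1) * ∑ b ∈ Kf, Nq q F m (1 - b) := by
    rw [Finset.sum_comp (fun b : F => Nq q F m (1 - b)) (fun a : F => a ^ (q + 1))]
    have himg : Finset.image (fun a : F => a ^ (q + 1)) univ = insert 0 Kf := by
      ext b
      simp only [Finset.mem_image, mem_univ, true_and, mem_insert, hKfdef, mem_filter]
      constructor
      · rintro ⟨a, rfl⟩
        by_cases ha : a = 0
        · subst ha; exact Or.inl (zero_pow (by omega))
        · exact Or.inr ⟨norm_mem_K hF a, pow_ne_zero _ ha⟩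
      · rintro (rfl | ⟨h1, h0⟩)
        · exact ⟨0, zero_pow (by omega)⟩
        · obtain ⟨μ, hμ⟩ := exists_norm_eq hq hF h1 h0; exact ⟨μ, hμ⟩
    rw [himg, Finset.sum_insert (by simp [hKfdef])]
    have hfib0 : (univ.filter fun a : F => a ^ (q + 1) = 0).card = 1 := by
      have : (univ.filter fun a : F => a ^ (q + 1) = 0) = {0} := by
        ext a
        simp [pow_eq_zero_iff (by omega : q + 1 ≠ 0)]
      rw [this, Finset.card_singleton]
    rw [hfib0, sub_zero, one_smul]
    congr 1
    rw [Finset.mul_sum]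
    refine Finset.sum_congr rfl fun b hb => ?_
    simp only [hKfdef, mem_filter, mem_univ, true_and] at hb
    rw [norm_fiber_card hq hF hb.1 hb.2, smul_eq_mul]
  have r4 : ∑ b ∈ Kf, Nq q F m (1 - b) = Nq q F m 0 + (q - 2) * Nq q F m 1 := by
    have hre : ∑ b ∈ Kf, Nq q F m (1 - b)
        = ∑ c ∈ univ.filter (fun c : F => c ^ q = c ∧ c ≠ 1), Nq q F m c := by
      refine Finset.sum_bij (fun b _ => 1 - b) ?_ ?_ ?_ ?_
      · intro b hb
        simp only [hKfdef, mem_filter, mem_univ, true_and] at hb ⊢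
        refine ⟨?_, ?_⟩
        · rw [frob_sub hq hF, one_pow, hb.1]
        · intro h
          exact hb.2 (by linear_combination -h)
      · intro b1 _ b2 _ h
        have := sub_right_injective h
        exact this
      · intro c hc
        simp only [mem_filter, mem_univ, true_and] at hc
        refine ⟨1 - c, ?_, by ring⟩
        simp only [hKfdef, mem_filter, mem_univ, true_and]
        refine ⟨by rw [frob_sub hq hF, one_pow, hc.1], ?_⟩
        intro h
        exact hc.2 (by linear_combination -h)
      · intro b _; rfl
    rw [hre]
    have h0mem : (0 : F) ∈ univ.filter (fun c : F => c ^ q = c ∧ c ≠ 1) := by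
      simp [zero_pow (by omega : q ≠ 0), zero_ne_one]
    rw [← Finset.insert_erase h0mem, Finset.sum_insert (Finset.notMem_erase _ _)]
    congr 1
    have hcard : ((univ.filter (fun c : F => c ^ q = c ∧ c ≠ 1)).erase 0).card = q - 2 := by
      have h1 : (univ.filter (fun c : F => c ^ q = c ∧ c ≠ 1))
          = (univ.filter (fun c : F => c ^ q = c)).erase 1 := by
        ext c; simp only [mem_filter, mem_univ, true_and, mem_erase]; tauto
      have h1mem : (1 : F) ∈ univ.filter (fun c : F => c ^ q = c) := by simp
      rw [Finset.card_erase_of_mem h0mem, h1, Finset.card_erase_of_mem h1mem, K_card hq hF]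
      omega
    rw [Finset.sum_congr rfl (fun c hc => by
        simp only [Finset.mem_erase, mem_filter, mem_univ, true_and] at hc
        exact Nq_scale hq hF hc.2.1 hc.1), Finset.sum_const, hcard, smul_eq_mul]
  rw [r12, r3, r4]

lemma Nq_closed (hq : IsPrimePow q) (hF : Fintype.card F = q ^ 2) (m : ℕ) :
    (Nq q F (m + 1) 1 : ℚ) = (q : ℚ) ^ (2 * m + 1) + (-1) ^ m * (q : ℚ) ^ m := by
  have hq2 : 2 ≤ q := hq.two_le
  have hq1 : 1 ≤ q := by omega
  induction m with
  | zero => rw [Nq_one hq hF]; push_cast; ring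
  | succ m ih =>
    have hrec := congrArg (Nat.cast : ℕ → ℚ) (Nq_rec hq hF (m + 1))
    push_cast [Nat.cast_sub hq2] at hrec
    have tot := congrArg (Nat.cast : ℕ → ℚ) (Nq_total hq hF (m + 1))
    push_cast [Nat.cast_sub hq1] at tot
    rw [hrec]
    linear_combination (q + 1 : ℚ) * tot - q * ih

variable (q) in
def herm {n : ℕ} (v w : Fin n → F) : F := ∑ j, v j * (w j) ^ q

omit [DecidableEq F] in
lemma herm_self {n : ℕ} (v : Fin n → F) : herm q v v = ∑ j, (v j) ^ (q + 1) := by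
  refine Finset.sum_congr rfl fun j _ => ?_
  rw [pow_succ']

omit [DecidableEq F] in
lemma herm_comm (hq : IsPrimePow q) (hF : Fintype.card F = q ^ 2) {n : ℕ} (v w : Fin n → F) :
    herm q w v = (herm q v w) ^ q := by
  rw [herm, herm, frob_sum hq hF]
  refine Finset.sum_congr rfl fun j _ => ?_
  rw [mul_pow, frob_frob hF, mul_comm]

omit [DecidableEq F] in
lemma herm_add_left {n : ℕ} (x y z : Fin n → F) :
    herm q (x + y) z = herm q x z + herm q y z := by
  simp [herm, add_mul, Finset.sum_add_distrib]

omit [DecidableEq F] in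
lemma herm_sub_left {n : ℕ} (x y z : Fin n → F) :
    herm q (x - y) z = herm q x z - herm q y z := by
  simp [herm, sub_mul, Finset.sum_sub_distrib]

omit [DecidableEq F] in
lemma herm_smul_left {n : ℕ} (c : F) (x z : Fin n → F) :
    herm q (c • x) z = c * herm q x z := by
  simp [herm, Finset.mul_sum, mul_assoc]

omit [DecidableEq F] in
lemma herm_sum_left {n : ℕ} {ι : Type*} (s : Finset ι) (f : ι → Fin n → F) (z : Fin n → F) :
    herm q (∑ i ∈ s, f i) z = ∑ i ∈ s, herm q (f i) z := by
  rw [herm]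
  simp only [Finset.sum_apply, Finset.sum_mul]
  rw [Finset.sum_comm]
  rfl

omit [DecidableEq F] in
lemma herm_add_right (hq : IsPrimePow q) (hF : Fintype.card F = q ^ 2) {n : ℕ} (x y z : Fin n → F) :
    herm q x (y + z) = herm q x y + herm q x z := by
  simp [herm, frob_add hq hF, mul_add, Finset.sum_add_distrib]

omit [DecidableEq F] in
lemma herm_smul_right {n : ℕ} (c : F) (x y : Fin n → F) :
    herm q x (c • y) = c ^ q * herm q x y := by
  rw [herm, herm, Finset.mul_sum]
  refine Finset.sum_congr rfl fun j _ => ?_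
  simp [mul_pow]
  ring

lemma herm_single_right (hq' : IsPrimePow q) {n : ℕ} (x : Fin n → F) (j0 : Fin n) :
    herm q x (Pi.single j0 1) = x j0 := by
  rw [herm]
  have : ∀ j : Fin n, x j * ((Pi.single j0 1 : Fin n → F) j) ^ q
      = if j = j0 then x j else 0 := by
    intro j
    rw [Pi.single_apply]
    by_cases h : j = j0 <;>
      simp [h, zero_pow (show q ≠ 0 by have := hq'.pos; omega)]
  rw [Finset.sum_congr rfl (fun j _ => this j), Finset.sum_ite_eq' univ j0 x]
  simp

lemma herm_single_left {n : ℕ} (y : Fin n → F) (j0 : Fin n) :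
    herm q (Pi.single j0 1) y = (y j0) ^ q := by
  rw [herm]
  have : ∀ j : Fin n, ((Pi.single j0 1 : Fin n → F) j) * (y j) ^ q
      = if j = j0 then (y j) ^ q else 0 := by
    intro j
    rw [Pi.single_apply]
    by_cases h : j = j0 <;> simp [h]
  rw [Finset.sum_congr rfl (fun j _ => this j),
    Finset.sum_ite_eq' univ j0 (fun j => (y j) ^ q)]
  simp

omit [DecidableEq F] in
lemma herm_sum_right (hq : IsPrimePow q) (hF : Fintype.card F = q ^ 2)
    {n : ℕ} {ι : Type*} (s : Finset ι) (x : Fin n → F) (f : ι → Fin n → F) :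
    herm q x (∑ i ∈ s, f i) = ∑ i ∈ s, herm q x (f i) := by
  rw [herm]
  simp only [Finset.sum_apply]
  rw [Finset.sum_congr rfl (fun j _ => by
    rw [frob_sum hq hF, Finset.mul_sum])]
  rw [Finset.sum_comm]
  rfl

lemma exists_ortho (hq : IsPrimePow q) (hF : Fintype.card F = q ^ 2) {n k : ℕ} (hkn : k < n)
    (v : Fin k → Fin n → F)
    (hv : ∀ i j, herm q (v i) (v j) = if i = j then 1 else 0) :
    ∃ w : Fin n → F, herm q w w = 1 ∧ ∀ i, herm q w (v i) = 0 := by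
  have hq0 : q ≠ 0 := by have := hq.pos; omega
  set L := (Matrix.of fun (i : Fin k) (j : Fin n) => (v i j) ^ q).mulVecLin with hL
  have hker : ∀ w : Fin n → F, w ∈ LinearMap.ker L ↔ ∀ i, herm q w (v i) = 0 := by
    intro w
    rw [LinearMap.mem_ker, funext_iff]
    refine forall_congr' fun i => ?_
    have : L w i = herm q w (v i) := by
      simp [hL, Matrix.mulVecLin_apply, Matrix.mulVec, dotProduct, herm, mul_comm]
    rw [this]
    simp
  -- nontrivial kernel
  have hne : ∃ w₀ : Fin n → F, w₀ ∈ LinearMap.ker L ∧ w₀ ≠ 0 := by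
    have h1 := LinearMap.finrank_range_add_finrank_ker L
    rw [Module.finrank_fin_fun] at h1
    have h2 : Module.finrank F (LinearMap.range L) ≤ k := by
      have := Submodule.finrank_le (LinearMap.range L)
      rwa [Module.finrank_fin_fun] at this
    have h3 : 0 < Module.finrank F (LinearMap.ker L) := by omega
    have hbot : LinearMap.ker L ≠ ⊥ := by
      intro h
      rw [h, finrank_bot] at h3
      omega
    obtain ⟨x, hx, hx0⟩ := (Submodule.ne_bot_iff _).1 hbot
    exact ⟨x, hx, hx0⟩
  -- there is an anisotropic vector in the kernel
  have key : ∃ w : Fin n → F, w ∈ LinearMap.ker L ∧ herm q w w ≠ 0 := by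
    by_contra hiso
    push_neg at hiso
    have horth : ∀ w ∈ LinearMap.ker L, ∀ w' ∈ LinearMap.ker L, herm q w w' = 0 := by
      intro w hw w' hw'
      by_contra ha
      obtain ⟨z, hz⟩ := trace_ne hq hF (pow_ne_zero q ha)
      apply hz
      have hmem : w + z • w' ∈ LinearMap.ker L :=
        Submodule.add_mem _ hw (Submodule.smul_mem _ _ hw')
      have hexp := hiso _ hmem
      simp only [herm_add_left, herm_add_right hq hF, herm_smul_left,
        herm_smul_right] at hexp
      rw [hiso _ hw, hiso _ hw', herm_comm hq hF w w'] at hexp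
      rw [mul_pow, frob_frob hF]
      linear_combination hexp
    have hall : ∀ w ∈ LinearMap.ker L, w = 0 := by
      intro w hw
      have hx : ∀ x : Fin n → F, herm q w x = 0 := by
        intro x
        set x' := x - ∑ i, herm q x (v i) • v i with hx'
        have hx'mem : x' ∈ LinearMap.ker L := by
          rw [hker]
          intro j
          rw [hx', herm_sub_left, herm_sum_left]
          rw [Finset.sum_congr rfl (fun i _ => by
            rw [herm_smul_left, hv i j, mul_ite, mul_one, mul_zero])]
          rw [Finset.sum_ite_eq' univ j (fun i => herm q x (v i))]
          simp
        have hdecomp : x = x' + ∑ i, herm q x (v i) • v i := by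
          rw [hx', sub_add_cancel]
        rw [hdecomp, herm_add_right hq hF]
        have h2 : herm q w (∑ i, herm q x (v i) • v i) = 0 := by
          rw [herm_sum_right hq hF]
          refine Finset.sum_eq_zero fun i _ => ?_
          rw [herm_smul_right, (hker w).1 hw i, mul_zero]
        rw [horth w hw x' hx'mem, h2, add_zero]
      funext j
      have := hx (Pi.single j 1)
      rwa [herm_single_right hq] at this
    obtain ⟨w₀, hw₀, hw₀0⟩ := hne
    exact hw₀0 (hall w₀ hw₀)
  obtain ⟨w, hwker, hc⟩ := key
  have hcK : (herm q w w) ^ q = herm q w w := by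
    rw [herm_self, frob_sum hq hF]
    exact Finset.sum_congr rfl fun j _ => norm_mem_K hF (w j)
  obtain ⟨μ, hμ⟩ := exists_norm_eq hq hF hcK hc
  have hμ0 : μ ≠ 0 := by
    rintro rfl
    rw [zero_pow (by omega : q + 1 ≠ 0)] at hμ
    exact hc hμ.symm
  refine ⟨μ⁻¹ • w, ?_, fun i => ?_⟩
  · rw [herm_smul_left, herm_smul_right]
    rw [show (μ⁻¹ : F) * (μ⁻¹ ^ q * herm q w w) = (μ * μ ^ q)⁻¹ * herm q w w by
      rw [mul_inv]; ring]
    rw [show μ * μ ^ q = μ ^ (q + 1) by rw [pow_succ']]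
    rw [hμ, inv_mul_cancel₀ hc]
  · rw [herm_smul_left, (hker w).1 hwker i, mul_zero]

lemma exists_completion (hq : IsPrimePow q) (hF : Fintype.card F = q ^ 2) {m : ℕ}
    (v : Fin (m + 1) → F) (hv : herm q v v = 1) :
    ∃ A : Fin (m + 1) → Fin (m + 1) → F,
      (∀ i j, herm q (A i) (A j) = if i = j then 1 else 0) ∧ A 0 = v := by
  suffices h : ∀ t : ℕ, t ≤ m + 1 → ∃ vv : Fin t → Fin (m + 1) → F,
      (∀ i j, herm q (vv i) (vv j) = if i = j then 1 else 0) ∧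
      (∀ ht : 0 < t, vv ⟨0, ht⟩ = v) by
    obtain ⟨vv, h1, h2⟩ := h (m + 1) le_rfl
    exact ⟨vv, h1, h2 (Nat.succ_pos m)⟩
  intro t
  induction t with
  | zero => exact fun _ => ⟨Fin.elim0, fun i => i.elim0, fun ht => absurd ht (by omega)⟩
  | succ t ih =>
    intro hle
    obtain ⟨vv, hvv, h0⟩ := ih (by omega)
    rcases Nat.eq_zero_or_pos t with rfl | hpos
    · refine ⟨fun _ => v, fun i j => ?_, fun _ => rfl⟩
      have : i = j := Fin.ext (by omega)
      rw [this, if_pos rfl, hv]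
    · obtain ⟨w, hw1, hw2⟩ := exists_ortho hq hF (by omega : t < m + 1) vv hvv
      refine ⟨Fin.snoc vv w, ?_, ?_⟩
      · intro i j
        refine Fin.lastCases ?_ ?_ i
        · refine Fin.lastCases ?_ ?_ j
          · rw [Fin.snoc_last, if_pos rfl, hw1]
          · intro j'
            rw [Fin.snoc_last, Fin.snoc_castSucc,
              if_neg (Fin.ne_of_gt (Fin.castSucc_lt_last j')), hw2]
        · intro i'
          refine Fin.lastCases ?_ ?_ j
          · rw [Fin.snoc_last, Fin.snoc_castSucc,
              if_neg (Fin.ne_of_lt (Fin.castSucc_lt_last i')),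
              herm_comm hq hF, hw2, zero_pow (by have := hq.pos; omega : q ≠ 0)]
          · intro j'
            rw [Fin.snoc_castSucc, Fin.snoc_castSucc, hvv i' j']
            congr 1
            simp [Fin.castSucc_inj]
      · intro ht
        have : (⟨0, ht⟩ : Fin (t + 1)) = Fin.castSucc ⟨0, hpos⟩ := rfl
        rw [this, Fin.snoc_castSucc, h0 hpos]

lemma mem_iff {n : ℕ} (A : Matrix (Fin n) (Fin n) F) :
    A * (A.map (· ^ q)).transpose = 1
      ↔ ∀ i j, herm q (A i) (A j) = if i = j then 1 else 0 := by
  have he : ∀ i j, (A * (A.map (· ^ q)).transpose) i j = herm q (A i) (A j) := by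
    intro i j
    rw [Matrix.mul_apply, herm]
    refine Finset.sum_congr rfl fun k _ => ?_
    rw [Matrix.transpose_apply, Matrix.map_apply]
  constructor
  · intro h i j
    rw [← he, h, Matrix.one_apply]
  · intro h
    ext i j
    rw [he, h, Matrix.one_apply]

omit [DecidableEq F] in
lemma CT_mul (hq : IsPrimePow q) (hF : Fintype.card F = q ^ 2) {n : ℕ}
    (X Y : Matrix (Fin n) (Fin n) F) :
    ((X * Y).map (· ^ q)).transpose
      = (Y.map (· ^ q)).transpose * (X.map (· ^ q)).transpose := by
  ext i j
  simp only [Matrix.transpose_apply, Matrix.map_apply, Matrix.mul_apply]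
  rw [frob_sum hq hF]
  refine Finset.sum_congr rfl fun k _ => ?_
  rw [mul_pow, mul_comm]

omit [DecidableEq F] in
lemma CT_CT (hF : Fintype.card F = q ^ 2) {n : ℕ} (X : Matrix (Fin n) (Fin n) F) :
    (((X.map (· ^ q)).transpose).map (· ^ q)).transpose = X := by
  ext i j
  simp [frob_frob hF]

lemma col_zero (hq : IsPrimePow q) (hF : Fintype.card F = q ^ 2) {m : ℕ}
    {A : Matrix (Fin (m + 1)) (Fin (m + 1)) F}
    (hA : A * (A.map (· ^ q)).transpose = 1)
    (h0 : A 0 = Pi.single 0 1) (i : Fin m) : A i.succ 0 = 0 := by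
  have h := (mem_iff A).1 hA i.succ 0
  rw [h0, herm_single_right hq, if_neg (Fin.succ_ne_zero i)] at h
  exact h

lemma card_step (hq : IsPrimePow q) (hF : Fintype.card F = q ^ 2) (m : ℕ) :
    Nat.card {A : Matrix (Fin (m + 1)) (Fin (m + 1)) F //
        A * (A.map (· ^ q)).transpose = 1}
      = Nq q F (m + 1) 1 * Nat.card {A : Matrix (Fin m) (Fin m) F //
          A * (A.map (· ^ q)).transpose = 1} := by
  have hq0 : q ≠ 0 := by have := hq.pos; omega
  set e0 : Fin (m + 1) → F := Pi.single 0 1 with he0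
  have he0unit : herm q e0 e0 = 1 := by
    rw [he0, herm_single_right hq, Pi.single_eq_same]
  -- fiber over e0 is equivalent to U(m)
  have hfib0 : Nat.card {A : Matrix (Fin (m + 1)) (Fin (m + 1)) F //
        (A * (A.map (· ^ q)).transpose = 1) ∧ A 0 = e0}
      = Nat.card {A : Matrix (Fin m) (Fin m) F //
          A * (A.map (· ^ q)).transpose = 1} := by
    apply Nat.card_congr
    refine ⟨fun A => ⟨Matrix.of fun i j => A.1 i.succ j.succ, ?_⟩,
      fun B => ⟨Matrix.of (Fin.cons e0 fun i => Fin.cons (0 : F) (B.1 i)), ?_, ?_⟩,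
      ?_, ?_⟩
    · -- toFun membership
      rw [mem_iff]
      intro i j
      have hmemA := (mem_iff A.1).1 A.2.1 i.succ j.succ
      have hcol := col_zero hq hF A.2.1 A.2.2
      have hsplit : herm q (A.1 i.succ) (A.1 j.succ)
          = herm q ((Matrix.of fun i j => A.1 i.succ j.succ) i)
              ((Matrix.of fun i j => A.1 i.succ j.succ) j) := by
        rw [herm, herm, Fin.sum_univ_succ, hcol i, zero_mul, zero_add]
        rfl
      rw [← hsplit, hmemA]
      simp [Fin.succ_inj]
    · -- invFun membership
      rw [mem_iff]
      intro i j
      have hrow : ∀ t : Fin (m + 1),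
          (Matrix.of (Fin.cons e0 fun r => Fin.cons (0 : F) (B.1 r))) t
          = Fin.cons (α := fun _ => Fin (m + 1) → F) e0
              (fun r => Fin.cons (0 : F) (B.1 r)) t := fun _ => rfl
      rw [hrow, hrow]
      refine Fin.cases ?_ ?_ i
      · refine Fin.cases ?_ ?_ j
        · rw [Fin.cons_zero, he0unit, if_pos rfl]
        · intro j'
          rw [Fin.cons_zero, Fin.cons_succ, he0, herm_single_left, Fin.cons_zero,
            zero_pow hq0, if_neg (Fin.succ_ne_zero j').symm]
      · intro i'
        refine Fin.cases ?_ ?_ j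
        · rw [Fin.cons_succ, Fin.cons_zero, he0, herm_single_right hq, Fin.cons_zero,
            if_neg (Fin.succ_ne_zero i')]
        · intro j'
          rw [Fin.cons_succ, Fin.cons_succ]
          have hB := (mem_iff B.1).1 B.2 i' j'
          rw [herm, Fin.sum_univ_succ, Fin.cons_zero, zero_mul, zero_add]
          simp only [Fin.cons_succ]
          rw [show (∑ k : Fin m, B.1 i' k * (B.1 j' k) ^ q)
              = herm q (B.1 i') (B.1 j') from rfl, hB]
          simp [Fin.succ_inj]
    · -- invFun row condition
      rfl
    · -- left inverse
      intro A
      apply Subtype.ext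
      funext i j
      refine Fin.cases ?_ ?_ i
      · simp only [Matrix.of_apply, Fin.cons_zero, A.2.2]
      · intro i'
        simp only [Matrix.of_apply, Fin.cons_succ]
        refine Fin.cases ?_ ?_ j
        · simp only [Fin.cons_zero]
          exact (col_zero hq hF A.2.1 A.2.2 i').symm
        · intro j'
          simp only [Fin.cons_succ, Matrix.of_apply]
    · -- right inverse
      intro B
      apply Subtype.ext
      funext i j
      simp [Matrix.of_apply, Fin.cons_succ]
  -- all unit-vector fibers have the same cardinality
  have hbij : ∀ v : Fin (m + 1) → F, herm q v v = 1 →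
      Nat.card {A : Matrix (Fin (m + 1)) (Fin (m + 1)) F //
          (A * (A.map (· ^ q)).transpose = 1) ∧ A 0 = v}
        = Nat.card {A : Matrix (Fin (m + 1)) (Fin (m + 1)) F //
            (A * (A.map (· ^ q)).transpose = 1) ∧ A 0 = e0} := by
    intro v hv
    obtain ⟨B, hB, hB0⟩ := exists_completion hq hF v hv
    set Bm : Matrix (Fin (m + 1)) (Fin (m + 1)) F := Matrix.of B with hBm
    have hBmem : Bm * (Bm.map (· ^ q)).transpose = 1 := (mem_iff Bm).2 hB
    have hBB : (Bm.map (· ^ q)).transpose * Bm = 1 := mul_eq_one_comm.1 hBmem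
    apply Nat.card_congr
    refine ⟨fun A => ⟨A.1 * (Bm.map (· ^ q)).transpose, ?_, ?_⟩,
      fun A' => ⟨A'.1 * Bm, ?_, ?_⟩, ?_, ?_⟩
    · rw [CT_mul hq hF, CT_CT hF, Matrix.mul_assoc,
        ← Matrix.mul_assoc ((Bm.map (· ^ q)).transpose), hBB, Matrix.one_mul,
        A.2.1]
    · funext j
      rw [Matrix.mul_apply]
      have : ∑ k, A.1 0 k * ((Bm.map (· ^ q)).transpose) k j
          = herm q (A.1 0) (Bm j) := rfl
      rw [this, A.2.2, ← hB0]
      rw [show herm q (B 0) (Bm j) = if (0 : Fin (m+1)) = j then 1 else 0 from hB 0 j]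
      rw [he0, Pi.single_apply]
      by_cases h : j = 0 <;> simp [h, eq_comm]
    · rw [CT_mul hq hF, Matrix.mul_assoc, ← Matrix.mul_assoc Bm, hBmem,
        Matrix.one_mul, A'.2.1]
    · funext j
      rw [Matrix.mul_apply]
      rw [show (A'.1 : Matrix _ _ F) 0 = e0 from A'.2.2]
      rw [he0]
      rw [Finset.sum_congr rfl (fun k _ => by
        rw [Pi.single_apply, ite_mul, one_mul, zero_mul])]
      rw [Finset.sum_ite_eq' univ (0 : Fin (m+1)) (fun k => Bm k j)]
      rw [if_pos (mem_univ _)]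
      exact congrFun hB0 j
    · intro A
      apply Subtype.ext
      show A.1 * (Bm.map (· ^ q)).transpose * Bm = A.1
      rw [Matrix.mul_assoc, hBB, Matrix.mul_one]
    · intro A'
      apply Subtype.ext
      show A'.1 * Bm * (Bm.map (· ^ q)).transpose = A'.1
      rw [Matrix.mul_assoc, hBmem, Matrix.mul_one]
  -- assemble
  rw [Nat.card_eq_fintype_card, Fintype.card_subtype]
  rw [Finset.card_eq_sum_card_fiberwise
    (f := fun A : Matrix (Fin (m + 1)) (Fin (m + 1)) F => A 0)
    (t := univ) (fun _ _ => mem_univ _)]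
  have hv_eval : ∀ v : Fin (m + 1) → F,
      ((univ.filter fun A : Matrix (Fin (m + 1)) (Fin (m + 1)) F =>
          A * (A.map (· ^ q)).transpose = 1).filter fun A => A 0 = v).card
      = if herm q v v = 1
        then Nat.card {A : Matrix (Fin (m + 1)) (Fin (m + 1)) F //
            (A * (A.map (· ^ q)).transpose = 1) ∧ A 0 = e0}
        else 0 := by
    intro v
    rw [Finset.filter_filter]
    by_cases hv : herm q v v = 1
    · rw [if_pos hv, ← hbij v hv, Nat.card_eq_fintype_card, Fintype.card_subtype]
    · rw [if_neg hv, Finset.card_eq_zero]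
      rw [Finset.eq_empty_iff_forall_notMem]
      intro A hA
      rw [mem_filter] at hA
      apply hv
      have := (mem_iff A).1 hA.2.1 0 0
      rw [if_pos rfl, hA.2.2] at this
      exact this
  rw [Finset.sum_congr rfl (fun v _ => hv_eval v)]
  rw [Finset.sum_ite, Finset.sum_const, Finset.sum_const_zero, add_zero,
    smul_eq_mul, hfib0]
  congr 1
  rw [show Nq q F (m + 1) 1 = (univ.filter fun x : Fin (m + 1) → F =>
      ∑ i, (x i) ^ (q + 1) = 1).card from rfl]
  congr 1
  apply Finset.filter_congr
  intro x _
  rw [herm_self]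

lemma card_zero :
    Nat.card {A : Matrix (Fin 0) (Fin 0) F //
      A * (A.map (· ^ q)).transpose = 1} = 1 := by
  haveI : Unique {A : Matrix (Fin 0) (Fin 0) F //
      A * (A.map (· ^ q)).transpose = 1} :=
    { default := ⟨1, by ext i j; exact i.elim0⟩
      uniq := fun A => Subtype.ext (by ext i j; exact i.elim0) }
  exact Nat.card_unique

end UGC

/-- The order of the finite unitary group `U(n,q)`, realized as the set of `n × n`
matrices `A` over the field `F` with `q^2` elements satisfying
`A * (A.map (·^q)).transpose = 1` (i.e. the inverse of `A` is its conjugate transpose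
under the involution `c ↦ c^q`), equals `q^{n^2} · ∏_{j=1}^{n} (1 - (-1)^j / q^j)`. -/
theorem unitary_group_card (q n : ℕ) (hq : IsPrimePow q) (hn : 0 < n)
    (F : Type) [Field F] [Fintype F] (hF : Fintype.card F = q ^ 2) :
    (Nat.card {A : Matrix (Fin n) (Fin n) F // A * (A.map (· ^ q)).transpose = 1} : ℚ) =
      (q : ℚ) ^ (n ^ 2) * ∏ j ∈ Finset.Icc 1 n, (1 - (-1) ^ j / (q : ℚ) ^ j) := by
  letI := Classical.decEq F
  have hq0 : (q : ℚ) ≠ 0 := Nat.cast_ne_zero.2 (by have := hq.pos; omega)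
  have main : ∀ m : ℕ,
      (Nat.card {A : Matrix (Fin m) (Fin m) F //
          A * (A.map (· ^ q)).transpose = 1} : ℚ)
        = (q : ℚ) ^ (m ^ 2) * ∏ j ∈ Finset.Icc 1 m, (1 - (-1) ^ j / (q : ℚ) ^ j) := by
    intro m
    induction m with
    | zero =>
      rw [UGC.card_zero]
      rw [show Finset.Icc 1 0 = ∅ from Finset.Icc_eq_empty (by omega)]
      simp
    | succ m ih =>
      rw [UGC.card_step hq hF m, Nat.cast_mul, ih, UGC.Nq_closed hq hF m]
      rw [Finset.prod_Icc_succ_top (by omega : 1 ≤ m + 1)]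
      have hpow : (q : ℚ) ^ ((m + 1) ^ 2) = (q : ℚ) ^ (m ^ 2) * (q : ℚ) ^ (2 * m + 1) := by
        rw [← pow_add]; congr 1; ring
      rw [hpow]
      have hkey : ((q : ℚ) ^ (2 * m + 1) + (-1) ^ m * (q : ℚ) ^ m)
          = (q : ℚ) ^ (2 * m + 1) * (1 - (-1) ^ (m + 1) / (q : ℚ) ^ (m + 1)) := by
        field_simp
        ring
      rw [hkey]
      ring
  exact main n
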